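/- Along trajectories of ẋ = (J−R)∇H(x) + G(x)u with the shifted model ẋ = (J − (R+Z(x)))∇S(x) + G(x)(u−ū) and output y = G(x)ᵀ∇S(x), the derivative of the shifted Hamiltonian satisfies dS/dt = −∇S(x)ᵀ(R+Z(x))∇S(x) + yᵀ(u−ū); hence if R + Z(x) is positive semidefinite, dS/dt ≤ (y − ȳ)ᵀ(u − ū), where ȳ = 0 is the output at x̄. -/

import Mathlib

open Matrix

private theorem shifted_alg (n : ℕ) (J R : Matrix (Fin n) (Fin n) ℝ) (hJ : Jᵀ = -J)
    (I : Set (Fin n)) [DecidablePred (· ∈ I)]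
    (u ubar g gb : Fin n → ℝ) (hu : ∀ i ∈ I, u i = 0 ∧ ubar i = 0)
    (hgb : ∀ i ∉ I, gb i ≠ 0) (hg : ∀ i ∉ I, g i ≠ 0)
    (G Gb : Matrix (Fin n) (Fin n) ℝ)
    (hG : G = Matrix.diagonal (fun i => if i ∈ I then 0 else (g i)⁻¹))
    (hGb : Gb = Matrix.diagonal (fun i => if i ∈ I then 0 else (gb i)⁻¹))
    (hss : (J - R) *ᵥ gb + Gb *ᵥ ubar = 0)
    (Z : Matrix (Fin n) (Fin n) ℝ) (hZ : Z = Gb * Matrix.diagonal ubar * G) :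
    (fun j => g j - gb j) ⬝ᵥ ((J - R) *ᵥ g + G *ᵥ u)
      = -((fun j => g j - gb j) ⬝ᵥ ((R + Z) *ᵥ (fun j => g j - gb j)))
        + (Gᵀ *ᵥ (fun j => g j - gb j)) ⬝ᵥ (u - ubar) := by
  set s : Fin n → ℝ := fun j => g j - gb j with hs
  have hskew : s ⬝ᵥ (J *ᵥ s) = 0 := by
    have h1 : s ⬝ᵥ J *ᵥ s = -(s ⬝ᵥ J *ᵥ s) := by
      conv_lhs => rw [dotProduct_mulVec, ← mulVec_transpose, hJ, neg_mulVec,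
        neg_dotProduct, dotProduct_comm]
    linarith
  have hss' : (J - R) *ᵥ gb = -(Gb *ᵥ ubar) := eq_neg_of_add_eq_zero_left hss
  have hkey : s ⬝ᵥ (Gb *ᵥ ubar) = s ⬝ᵥ (Z *ᵥ s) + s ⬝ᵥ (G *ᵥ ubar) := by
    rw [hZ, hG, hGb, Matrix.diagonal_mul_diagonal, Matrix.diagonal_mul_diagonal]
    rw [← dotProduct_add]
    simp only [dotProduct, mulVec_diagonal, Pi.add_apply]
    refine Finset.sum_congr rfl fun i _ => ?_
    by_cases hi : i ∈ I
    · simp [hi, (hu i hi).2]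
    · have h1 := hgb i hi; have h2 := hg i hi
      simp only [hi, if_neg, hs, if_false]
      field_simp
      ring
  have htr : s ⬝ᵥ (G *ᵥ (u - ubar)) = (Gᵀ *ᵥ s) ⬝ᵥ (u - ubar) := by
    rw [dotProduct_mulVec, ← mulVec_transpose]
  calc s ⬝ᵥ ((J - R) *ᵥ g + G *ᵥ u)
      = s ⬝ᵥ ((J - R) *ᵥ s) + s ⬝ᵥ ((J - R) *ᵥ gb) + s ⬝ᵥ (G *ᵥ u) := by
        have : g = s + gb := by funext j; simp [hs]
        rw [this, mulVec_add, dotProduct_add, dotProduct_add]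
    _ = -(s ⬝ᵥ (R *ᵥ s)) - s ⬝ᵥ (Gb *ᵥ ubar) + s ⬝ᵥ (G *ᵥ u) := by
        rw [hss', Matrix.sub_mulVec, dotProduct_sub, hskew, dotProduct_neg]
        ring
    _ = -(s ⬝ᵥ ((R + Z) *ᵥ s)) + (Gᵀ *ᵥ s) ⬝ᵥ (u - ubar) := by
        rw [hkey, Matrix.add_mulVec, dotProduct_add, ← htr, mulVec_sub, dotProduct_sub]
        ring

/-- Shifted passivity.  Along trajectories of `ẋ = (J−R)∇H(x) + G(x)u` with output
`y = G(x)ᵀ∇S(x)`, the shifted Hamiltonian `S(x) = H(x) − ⟨x−x̄, ∇H(x̄)⟩ − H(x̄)` satisfies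
`dS/dt = −∇S(x)ᵀ(R+Z(x))∇S(x) + yᵀ(u−ū)`; hence if `R + Z(x) ⪰ 0` then
`dS/dt ≤ (y − ȳ)ᵀ(u − ū)` with `ȳ = 0`. -/
theorem shifted_passivity (n : ℕ)
    (J R : Matrix (Fin n) (Fin n) ℝ) (hJ : Jᵀ = -J) (hR : R.PosSemidef)
    (H : EuclideanSpace ℝ (Fin n) → ℝ) (hH : Differentiable ℝ H)
    (I : Set (Fin n)) [DecidablePred (· ∈ I)]
    (u ubar : Fin n → ℝ) (hu : ∀ i ∈ I, u i = 0 ∧ ubar i = 0)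
    (xbar : EuclideanSpace ℝ (Fin n)) (hxbar : ∀ i ∉ I, 0 < gradient H xbar i)
    (G : EuclideanSpace ℝ (Fin n) → Matrix (Fin n) (Fin n) ℝ)
    (hG : ∀ x, G x = Matrix.diagonal (fun i => if i ∈ I then 0 else (gradient H x i)⁻¹))
    (hss : (J - R) *ᵥ (fun j => gradient H xbar j) + G xbar *ᵥ ubar = 0)
    (Z : EuclideanSpace ℝ (Fin n) → Matrix (Fin n) (Fin n) ℝ)
    (hZ : ∀ x, Z x = G xbar * Matrix.diagonal ubar * G x)
    (γ : ℝ → EuclideanSpace ℝ (Fin n)) (t : ℝ)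
    (hγ : HasDerivAt γ
      (WithLp.toLp 2 (fun i => ((J - R) *ᵥ (fun j => gradient H (γ t) j) + G (γ t) *ᵥ u) i)) t)
    (hΩ : ∀ i ∉ I, 0 < gradient H (γ t) i) :
    let S : EuclideanSpace ℝ (Fin n) → ℝ :=
      fun x => H x - (inner ℝ (x - xbar) (gradient H xbar) : ℝ) - H xbar
    let s : Fin n → ℝ := fun j => gradient H (γ t) j - gradient H xbar j
    let y : Fin n → ℝ := (G (γ t))ᵀ *ᵥ s
    HasDerivAt (fun τ => S (γ τ)) (-(s ⬝ᵥ ((R + Z (γ t)) *ᵥ s)) + y ⬝ᵥ (u - ubar)) t ∧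
      ((R + Z (γ t)).PosSemidef →
        -(s ⬝ᵥ ((R + Z (γ t)) *ᵥ s)) + y ⬝ᵥ (u - ubar) ≤ (y - 0) ⬝ᵥ (u - ubar)) := by
  intro S s y
  set w : Fin n → ℝ := (J - R) *ᵥ (fun j => gradient H (γ t) j) + G (γ t) *ᵥ u with hw
  set v : EuclideanSpace ℝ (Fin n) := WithLp.toLp 2 (fun i => w i) with hv
  constructor
  · -- analytic part
    have h1 : HasDerivAt (fun τ => H (γ τ)) (inner ℝ (gradient H (γ t)) v : ℝ) t := by
      have := ((hH (γ t)).hasGradientAt.hasFDerivAt).comp_hasDerivAt t hγ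
      simp only [InnerProductSpace.toDual_apply_apply] at this; exact this
    have h2 : HasDerivAt (fun τ => (inner ℝ (γ τ - xbar) (gradient H xbar) : ℝ))
        ((inner ℝ v (gradient H xbar) : ℝ)) t := by
      have := HasDerivAt.inner ℝ (hγ.sub_const xbar) (hasDerivAt_const t (gradient H xbar))
      simpa using this
    have hd : HasDerivAt (fun τ => S (γ τ))
        ((inner ℝ (gradient H (γ t)) v : ℝ) - inner ℝ v (gradient H xbar)) t := by
      exact (h1.sub h2).sub_const (H xbar)
    have heq : (inner ℝ (gradient H (γ t)) v : ℝ) - inner ℝ v (gradient H xbar) = s ⬝ᵥ w := by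
      simp only [PiLp.inner_apply, RCLike.inner_apply, conj_trivial, dotProduct,
        ← Finset.sum_sub_distrib]
      refine Finset.sum_congr rfl fun i _ => ?_
      show w i * gradient H (γ t) i - gradient H xbar i * w i = s i * w i
      simp only [s]; ring
    have halg : s ⬝ᵥ w = -(s ⬝ᵥ ((R + Z (γ t)) *ᵥ s)) + y ⬝ᵥ (u - ubar) :=
      shifted_alg n J R hJ I u ubar (fun j => gradient H (γ t) j)
        (fun j => gradient H xbar j) hu
        (fun i hi => ne_of_gt (hxbar i hi)) (fun i hi => ne_of_gt (hΩ i hi))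
        (G (γ t)) (G xbar) (hG (γ t)) (hG xbar) hss (Z (γ t)) (hZ (γ t))
    rw [← halg, ← heq]
    exact hd
  · intro hM
    have h0 : 0 ≤ s ⬝ᵥ ((R + Z (γ t)) *ᵥ s) := by
      simpa using hM.dotProduct_mulVec_nonneg s
    have : (y - 0) ⬝ᵥ (u - ubar) = y ⬝ᵥ (u - ubar) := by rw [sub_zero]
    rw [this]
    linarith
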